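/- Let g be simply-laced with index set I, let ξ be a height function, ℓ ≥ 1, and let Î^{≤ξ}_ℓ = {(i,p) : i ∈ I, ξ(i) − 2ℓ ≤ p ≤ ξ(i), p ≡ ξ(i) mod 2}. Define the skew-symmetric matrix L^{≤ξ}_ℓ by L^{≤ξ}_ℓ((i,r),(j,s)) = Σ_{k≥0, r+2k≤ξ(i)} Σ_{l≥0, s+2l≤ξ(j)} N_{ij}(s + 2l − r − 2k), where N_{ij}(k) = C̃_{ij}(k+1) + C̃_{ij}(−k−1) − C̃_{ij}(k−1) − C̃_{ij}(−k+1) (with C̃_{ij}(m) = 0 for m ≤ 0), and let B^{≤ξ}_ℓ be the exchange matrix of the quiver Γ^{≤ξ}_ℓ with mutable part Î^{≤ξ}_{ℓ-1}. Then (L^{≤ξ}_ℓ, B^{≤ξ}_ℓ) is a compatible pair: (B^{≤ξ}_ℓ)^T L^{≤ξ}_ℓ = (2·Id | 0), i.e. ((B^{≤ξ}_ℓ)^T L^{≤ξ}_ℓ)((i,r),(j,s)) = 2 if (i,r) = (j,s) and 0 otherwise, for (i,r) mutable. -/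

import Mathlib

variable {I : Type} [Fintype I] [DecidableEq I]

/-- `z·C(z)` over `ℤ[[z]]` for a symmetric (generalized) Cartan matrix `C`. -/
noncomputable def zqCartan (C : Matrix I I ℤ) : Matrix I I (PowerSeries ℤ) :=
  Matrix.of fun i j =>
    if i = j then PowerSeries.X ^ 2 + 1 else (C i j : PowerSeries ℤ) * PowerSeries.X

/-- The coefficients `C̃_{ij}(m)` of the inverse quantum Cartan matrix
(`C̃(z)_{ij} = z·((z·C(z))⁻¹)_{ij}`), with `C̃_{ij}(m) = 0` for `m ≤ 0`. -/
noncomputable def cTildeCoeff (C : Matrix I I ℤ) (i j : I) (m : ℤ) : ℤ :=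
  if 0 ≤ m then PowerSeries.coeff (R := ℤ) m.toNat (PowerSeries.X * (zqCartan C)⁻¹ i j) else 0

/-- `N_{ij}(k) = C̃_{ij}(k+1) + C̃_{ij}(−k−1) − C̃_{ij}(k−1) − C̃_{ij}(−k+1)`. -/
noncomputable def Nfun (C : Matrix I I ℤ) (i j : I) (k : ℤ) : ℤ :=
  cTildeCoeff C i j (k + 1) + cTildeCoeff C i j (-k - 1) -
    cTildeCoeff C i j (k - 1) - cTildeCoeff C i j (-k + 1)

/-- The vertex set `Î^{≤ξ}_ℓ = {(i, ξ i − 2k) : i ∈ I, 0 ≤ k ≤ ℓ}`, parameterized by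
`I × Fin (ℓ+1)` via `(i, k) ↦ (i, ξ i − 2k)`. -/
def toVertex (ξ : I → ℤ) {ℓ : ℕ} (u : I × Fin (ℓ + 1)) : I × ℤ :=
  (u.1, ξ u.1 - 2 * ((u.2 : ℕ) : ℤ))

/-- There is an arrow `p → q` in the quiver `Γ` iff `C_{p₁ q₁} ≠ 0` and
`q₂ = p₂ + C_{p₁ q₁}`. -/
def HasArrow (C : Matrix I I ℤ) (p q : I × ℤ) : Prop :=
  C p.1 q.1 ≠ 0 ∧ q.2 = p.2 + C p.1 q.1

instance (C : Matrix I I ℤ) (p q : I × ℤ) : Decidable (HasArrow C p q) := by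
  unfold HasArrow; infer_instance

/-- The entry `B_{pq} = #(arrows q → p) − #(arrows p → q)` of the exchange matrix of the
quiver `Γ^{≤ξ}_ℓ` (the diagram being simply laced, arrow multiplicities are `0` or `1`). -/
noncomputable def Bent (C : Matrix I I ℤ) (p q : I × ℤ) : ℤ :=
  (if HasArrow C q p then 1 else 0) - (if HasArrow C p q then 1 else 0)

/-- The skew-symmetric matrix
`L^{≤ξ}_ℓ((i,r),(j,s)) = Σ_{k≥0, r+2k≤ξ i} Σ_{l≥0, s+2l≤ξ j} N_{ij}(s+2l−r−2k)`,
in the parameterization `(i, r) = (u₁, ξ u₁ − 2u₂)` (so `k` ranges over `0, …, u₂`). -/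
noncomputable def Lmat (C : Matrix I I ℤ) (ξ : I → ℤ) {ℓ : ℕ}
    (u v : I × Fin (ℓ + 1)) : ℤ :=
  ∑ a ∈ Finset.range ((u.2 : ℕ) + 1), ∑ b ∈ Finset.range ((v.2 : ℕ) + 1),
    Nfun C u.1 v.1 ((ξ v.1 - 2 * ((v.2 : ℕ) : ℤ) + 2 * (b : ℤ)) -
      (ξ u.1 - 2 * ((u.2 : ℕ) : ℤ)) - 2 * (a : ℤ))

open PowerSeries Finset

lemma cT_nonpos (C : Matrix I I ℤ) (i j : I) {m : ℤ} (hm : m ≤ 0) :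
    cTildeCoeff C i j m = 0 := by
  unfold cTildeCoeff
  rcases lt_or_eq_of_le hm with h | h
  · rw [if_neg (by omega)]
  · subst h
    rw [if_pos le_rfl]
    simp [PowerSeries.coeff_zero_eq_constantCoeff, map_mul]

lemma zq_unit (C : Matrix I I ℤ) : IsUnit (zqCartan C).det := by
  rw [PowerSeries.isUnit_iff_constantCoeff, RingHom.map_det]
  have : (PowerSeries.constantCoeff (R := ℤ)).mapMatrix (zqCartan C) = 1 := by
    ext i j
    by_cases h : i = j
    · subst h; simp [zqCartan, Matrix.one_apply]
    · simp [zqCartan, Matrix.map_apply, Matrix.one_apply, h]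
  rw [this]
  simp

lemma entry_ident (C : Matrix I I ℤ) (i j : I) :
    ∑ u, zqCartan C i u * (zqCartan C)⁻¹ u j
      = if i = j then (1 : PowerSeries ℤ) else 0 := by
  have h := Matrix.mul_nonsing_inv (zqCartan C) (zq_unit C)
  have h2 := congrFun (congrFun h i) j
  rw [Matrix.mul_apply] at h2
  rw [h2, Matrix.one_apply]

lemma zq_diag (C : Matrix I I ℤ) (i : I) : zqCartan C i i = PowerSeries.X ^ 2 + 1 := by
  simp [zqCartan]

lemma zq_off (C : Matrix I I ℤ) {i u : I} (h : i ≠ u) :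
    zqCartan C i u = (C i u : PowerSeries ℤ) * PowerSeries.X := by
  simp [zqCartan, h]

/-- canonical-form identity -/
lemma hX_ident (C : Matrix I I ℤ) (i j : I) :
    (PowerSeries.X * (zqCartan C)⁻¹ i j)
      + PowerSeries.X * (PowerSeries.X * (PowerSeries.X * (zqCartan C)⁻¹ i j))
      + ∑ u ∈ Finset.univ.erase i,
          C i u • (PowerSeries.X * (PowerSeries.X * (zqCartan C)⁻¹ u j))
      = if i = j then PowerSeries.X else 0 := by
  have h := congrArg (fun f => PowerSeries.X * f) (entry_ident C i j)
  simp only [Finset.mul_sum] at h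
  rw [← Finset.add_sum_erase _ _ (Finset.mem_univ i)] at h
  have e0 : PowerSeries.X * (zqCartan C i i * (zqCartan C)⁻¹ i j)
      = (PowerSeries.X * (zqCartan C)⁻¹ i j)
        + PowerSeries.X * (PowerSeries.X * (PowerSeries.X * (zqCartan C)⁻¹ i j)) := by
    rw [zq_diag]; ring
  have e1 : ∀ u ∈ Finset.univ.erase i,
      PowerSeries.X * (zqCartan C i u * (zqCartan C)⁻¹ u j)
        = C i u • (PowerSeries.X * (PowerSeries.X * (zqCartan C)⁻¹ u j)) := by
    intro u hu
    have hne : i ≠ u := (Finset.ne_of_mem_erase hu).symm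
    rw [zq_off C hne, zsmul_eq_mul]
    ring
  rw [e0, Finset.sum_congr rfl e1] at h
  rw [mul_ite, mul_one, mul_zero] at h
  exact h

noncomputable def gfun (C : Matrix I I ℤ) (j u : I) : PowerSeries ℤ :=
  PowerSeries.X * (zqCartan C)⁻¹ u j

lemma coeff_one_X_mul (f : PowerSeries ℤ) :
    PowerSeries.coeff (R := ℤ) 1 (PowerSeries.X * f) = PowerSeries.constantCoeff (R := ℤ) f := by
  rw [show (1:ℕ) = 0+1 from rfl, PowerSeries.coeff_succ_X_mul,
    PowerSeries.coeff_zero_eq_constantCoeff]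

lemma constantCoeff_gfun (C : Matrix I I ℤ) (j u : I) :
    PowerSeries.constantCoeff (R := ℤ) (gfun C j u) = 0 := by
  unfold gfun
  rw [map_mul, PowerSeries.constantCoeff_X, zero_mul]

lemma cT_ofNat (C : Matrix I I ℤ) (i j : I) (n : ℕ) :
    cTildeCoeff C i j (n : ℤ) = PowerSeries.coeff (R := ℤ) n (gfun C j i) := by
  unfold cTildeCoeff gfun
  rw [if_pos (by positivity), Int.toNat_natCast]

lemma hX_ident' (C : Matrix I I ℤ) (i j : I) :
    gfun C j i + PowerSeries.X * (PowerSeries.X * gfun C j i)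
      + ∑ u ∈ Finset.univ.erase i, C i u • (PowerSeries.X * gfun C j u)
      = if i = j then PowerSeries.X else 0 := by
  unfold gfun
  exact hX_ident C i j

lemma keyOne (C : Matrix I I ℤ) (i j : I) :
    cTildeCoeff C i j 1 = if i = j then 1 else 0 := by
  have h := congrArg (PowerSeries.coeff (R := ℤ) 1) (hX_ident' C i j)
  simp only [map_add, map_sum, map_zsmul] at h
  rw [coeff_one_X_mul, map_mul, PowerSeries.constantCoeff_X, zero_mul, add_zero] at h
  rw [Finset.sum_congr rfl (fun u _ => by
      rw [coeff_one_X_mul, constantCoeff_gfun, smul_zero] : ∀ u ∈ Finset.univ.erase i,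
        C i u • (PowerSeries.coeff (R := ℤ) 1) (PowerSeries.X * gfun C j u) = 0),
    Finset.sum_const_zero, add_zero] at h
  rw [show ((1:ℤ)) = ((1:ℕ):ℤ) by norm_num, cT_ofNat, h]
  split_ifs <;> simp [PowerSeries.coeff_one_X]

lemma keyNat (C : Matrix I I ℤ) (i j : I) (n : ℕ) :
    PowerSeries.coeff (R := ℤ) n (gfun C j i) + PowerSeries.coeff (R := ℤ) (n+2) (gfun C j i)
      + ∑ u ∈ Finset.univ.erase i, C i u * PowerSeries.coeff (R := ℤ) (n+1) (gfun C j u)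
      = 0 := by
  have h := congrArg (PowerSeries.coeff (R := ℤ) (n+1+1)) (hX_ident' C i j)
  simp only [map_add, map_sum, map_zsmul] at h
  rw [PowerSeries.coeff_succ_X_mul, PowerSeries.coeff_succ_X_mul] at h
  rw [Finset.sum_congr rfl (fun u _ => by
      rw [PowerSeries.coeff_succ_X_mul, smul_eq_mul] : ∀ u ∈ Finset.univ.erase i,
        C i u • (PowerSeries.coeff (R := ℤ) (n+1+1)) (PowerSeries.X * gfun C j u)
          = C i u * PowerSeries.coeff (R := ℤ) (n+1) (gfun C j u))] at h
  have hr : (PowerSeries.coeff (R := ℤ) (n+1+1)) (if i = j then (PowerSeries.X : PowerSeries ℤ) else 0) = 0 := by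
    split_ifs <;> simp [PowerSeries.coeff_X]
  rw [hr] at h
  rw [show n+2 = n+1+1 from rfl]
  linarith [h]

lemma key (C : Matrix I I ℤ) (i j : I) (m : ℤ) :
    cTildeCoeff C i j (m - 1) + cTildeCoeff C i j (m + 1)
      + ∑ u ∈ Finset.univ.erase i, C i u * cTildeCoeff C u j m
      = if i = j ∧ m = 0 then 1 else 0 := by
  rcases lt_trichotomy m 0 with h | h | h
  · rw [cT_nonpos C i j (by omega), cT_nonpos C i j (by omega),
      Finset.sum_eq_zero (fun u _ => by rw [cT_nonpos C u j (by omega), mul_zero]),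
      if_neg (by omega)]
    ring
  · subst h
    rw [cT_nonpos C i j (by omega),
      Finset.sum_eq_zero (fun u _ => by rw [cT_nonpos C u j (by omega), mul_zero])]
    rw [show (0:ℤ)+1 = 1 from rfl, keyOne]
    simp
  · obtain ⟨n, rfl⟩ : ∃ n : ℕ, m = (n : ℤ) + 1 := ⟨(m-1).toNat, by omega⟩
    rw [show ((n:ℤ) + 1 - 1) = ((n:ℕ):ℤ) by ring, cT_ofNat,
      show ((n:ℤ) + 1 + 1) = ((n+2 : ℕ) : ℤ) by push_cast; ring, cT_ofNat,
      Finset.sum_congr rfl (fun u _ => by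
        rw [show ((n:ℤ) + 1) = ((n+1 : ℕ) : ℤ) by push_cast; ring, cT_ofNat]),
      if_neg (by omega)]
    exact keyNat C i j n

lemma NR (C : Matrix I I ℤ) (hsym : C.IsSymm) (j c : I) (k : ℤ) :
    Nfun C j c k + Nfun C j c (k + 2)
      + ∑ i ∈ Finset.univ.erase j, C i j * Nfun C i c (k + 1)
      = if j = c then
          ((if k = -2 then (2:ℤ) else 0) - (if k = 0 then 2 else 0)) else 0 := by
  have h1 := key C j c (k + 2)
  have h2 := key C j c (-k - 2)
  have h3 := key C j c k
  have h4 := key C j c (-k)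
  rw [show k + 2 - 1 = k + 1 by ring, show k + 2 + 1 = k + 3 by ring] at h1
  rw [show -k - 2 - 1 = -k - 3 by ring, show -k - 2 + 1 = -k - 1 by ring] at h2
  rw [show -k - 1 = -k - 1 by ring, show -k + 1 = -k + 1 by ring] at h4
  have hsum : ∑ i ∈ Finset.univ.erase j, C i j * Nfun C i c (k + 1)
      = ((∑ u ∈ Finset.univ.erase j, C j u * cTildeCoeff C u c (k + 2))
        + ∑ u ∈ Finset.univ.erase j, C j u * cTildeCoeff C u c (-k - 2))
        - (∑ u ∈ Finset.univ.erase j, C j u * cTildeCoeff C u c k)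
        - ∑ u ∈ Finset.univ.erase j, C j u * cTildeCoeff C u c (-k) := by
    rw [← Finset.sum_add_distrib, ← Finset.sum_sub_distrib, ← Finset.sum_sub_distrib]
    apply Finset.sum_congr rfl
    intro u _
    have hcs : C u j = C j u := hsym.apply j u
    unfold Nfun
    rw [show k + 1 + 1 = k + 2 by ring, show -(k+1) - 1 = -k - 2 by ring,
      show k + 1 - 1 = k by ring, show -(k+1) + 1 = -k by ring, hcs]
    ring
  rw [hsum]
  unfold Nfun
  rw [show k + 2 + 1 = k + 3 by ring, show -(k+2) - 1 = -k - 3 by ring,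
    show k + 2 - 1 = k + 1 by ring, show -(k+2) + 1 = -k - 1 by ring]
  by_cases hjc : j = c
  · subst hjc
    simp only [if_pos rfl, true_and] at h1 h2 h3 h4 ⊢
    by_cases hk2 : k = -2
    · subst hk2
      norm_num at h1 h2 h3 h4 ⊢
      linarith
    · by_cases hk0 : k = 0
      · subst hk0
        norm_num at h1 h2 h3 h4 ⊢
        linarith
      · rw [if_neg (show ¬(k + 2 = 0) from by omega)] at h1
        rw [if_neg (show ¬(-k - 2 = 0) from by omega)] at h2
        rw [if_neg hk0] at h3
        rw [if_neg (show ¬(-k = 0) from by omega)] at h4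
        rw [if_neg hk2, if_neg hk0]
        simp only [if_true]
        linarith
  · simp only [hjc, false_and, if_false] at h1 h2 h3 h4
    rw [if_neg hjc]
    linarith

noncomputable def Lrow (C : Matrix I I ℤ) (ξ : I → ℤ) (c : I) (S : ℤ) (nb : ℕ)
    (i : I) (t : ℕ) : ℤ :=
  ∑ b ∈ Finset.range nb, Nfun C i c (S + 2 * (b : ℤ) - ξ i + 2 * (t : ℤ))

noncomputable def Lm (C : Matrix I I ℤ) (ξ : I → ℤ) (c : I) (S : ℤ) (nb : ℕ)
    (i : I) (t : ℕ) : ℤ :=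
  ∑ a ∈ Finset.range (t + 1), Lrow C ξ c S nb i a

lemma Lm_succ (C : Matrix I I ℤ) (ξ : I → ℤ) (c : I) (S : ℤ) (nb : ℕ) (i : I) (t : ℕ) :
    Lm C ξ c S nb i (t + 1) = Lm C ξ c S nb i t + Lrow C ξ c S nb i (t + 1) :=
  Finset.sum_range_succ _ _

lemma Lm_zero (C : Matrix I I ℤ) (ξ : I → ℤ) (c : I) (S : ℤ) (nb : ℕ) (i : I) :
    Lm C ξ c S nb i 0 = Lrow C ξ c S nb i 0 := by
  unfold Lm; rw [Finset.sum_range_one]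

lemma Lmat_eq (C : Matrix I I ℤ) (ξ : I → ℤ) {ℓ : ℕ} (i : I) (t : Fin (ℓ + 1))
    (v : I × Fin (ℓ + 1)) :
    Lmat C ξ (i, t) v
      = Lm C ξ v.1 (ξ v.1 - 2 * ((v.2 : ℕ) : ℤ)) ((v.2 : ℕ) + 1) i (t : ℕ) := by
  unfold Lmat Lm Lrow
  simp only []
  rw [← Finset.sum_range_reflect]
  apply Finset.sum_congr rfl
  intro a ha
  have ha' : a ≤ (t : ℕ) := by
    have := Finset.mem_range.mp ha; omega
  apply Finset.sum_congr rfl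
  intro b _
  apply congrArg
  have hc : (((t : ℕ) + 1 - 1 - a : ℕ) : ℤ) = ((t : ℕ) : ℤ) - (a : ℤ) := by omega
  rw [hc]
  ring

lemma Bent_mul (C : Matrix I I ℤ) (p q : I × ℤ) (L : ℤ) :
    Bent C p q * L = (if HasArrow C q p then L else 0) - (if HasArrow C p q then L else 0) := by
  unfold Bent; split_ifs <;> ring

lemma sum_ite_single (n : ℕ) (P : ℕ → Prop) [DecidablePred P] (f : ℕ → ℤ) (t : ℕ)
    (ht : t < n) (hP : ∀ a, a < n → (P a ↔ a = t)) :
    (∑ a ∈ Finset.range n, if P a then f a else 0) = f t := by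
  rw [Finset.sum_congr rfl (fun a ha =>
    if_congr (hP a (Finset.mem_range.mp ha)) rfl rfl)]
  rw [Finset.sum_ite_eq' (Finset.range n) t f, if_pos (Finset.mem_range.mpr ht)]

lemma sum_ite_none (n : ℕ) (P : ℕ → Prop) [DecidablePred P] (f : ℕ → ℤ)
    (hP : ∀ a, a < n → ¬ P a) :
    (∑ a ∈ Finset.range n, if P a then f a else 0) = 0 := by
  apply Finset.sum_eq_zero
  intro a ha
  rw [if_neg (hP a (Finset.mem_range.mp ha))]

lemma inner_diag (C : Matrix I I ℤ) (hdiag : ∀ i, C i i = 2) (ξ : I → ℤ) (c : I)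
    (S : ℤ) (nb : ℕ) (j' : I) (n en : ℕ) (hen : en + 1 < n) :
    (∑ a ∈ Finset.range n,
        Bent C (j', ξ j' - 2 * (a : ℤ)) (j', ξ j' - 2 * (en : ℤ)) * Lm C ξ c S nb j' a)
      = -(Lrow C ξ c S nb j' en + Lrow C ξ c S nb j' (en + 1)) := by
  rw [Finset.sum_congr rfl (fun a _ => Bent_mul C _ _ _), Finset.sum_sub_distrib]
  by_cases he1 : 1 ≤ en
  · rw [sum_ite_single n _ _ (en - 1) (by omega) (fun a ha => by
      simp only [HasArrow]
      rw [hdiag j']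
      omega)]
    rw [sum_ite_single n _ _ (en + 1) hen (fun a ha => by
      simp only [HasArrow]
      rw [hdiag j']
      omega)]
    rw [show en + 1 = (en - 1) + 1 + 1 from by omega, Lm_succ, Lm_succ,
      show en - 1 + 1 = en from by omega]
    ring
  · have he0 : en = 0 := by omega
    subst he0
    rw [sum_ite_none n _ _ (fun a ha => by
      simp only [HasArrow]
      rw [hdiag j']
      omega)]
    rw [sum_ite_single n _ _ 1 hen (fun a ha => by
      simp only [HasArrow]
      rw [hdiag j']
      omega)]
    rw [show (1:ℕ) = 0 + 1 from rfl, Lm_succ, Lm_zero]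
    ring

lemma inner_zero (C : Matrix I I ℤ) (ξ : I → ℤ) (c : I)
    (S : ℤ) (nb : ℕ) (i j' : I) (n en : ℕ)
    (hCij : C i j' = 0) (hCji : C j' i = 0) :
    (∑ a ∈ Finset.range n,
        Bent C (i, ξ i - 2 * (a : ℤ)) (j', ξ j' - 2 * (en : ℤ)) * Lm C ξ c S nb i a)
      = 0 := by
  rw [Finset.sum_congr rfl (fun a _ => Bent_mul C _ _ _), Finset.sum_sub_distrib]
  rw [sum_ite_none n _ _ (fun a ha => by
    simp only [HasArrow]
    rw [hCji]
    omega)]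
  rw [sum_ite_none n _ _ (fun a ha => by
    simp only [HasArrow]
    rw [hCij]
    omega)]
  ring

lemma inner_off (C : Matrix I I ℤ) (ξ : I → ℤ) (c : I)
    (S : ℤ) (nb : ℕ) (i j' : I) (n en : ℕ)
    (hCij : C i j' = -1) (hCji : C j' i = -1)
    (hξ : ξ i = ξ j' + 1 ∨ ξ j' = ξ i + 1) (hen : en + 1 < n) :
    (∑ a ∈ Finset.range n,
        Bent C (i, ξ i - 2 * (a : ℤ)) (j', ξ j' - 2 * (en : ℤ)) * Lm C ξ c S nb i a)
      = ∑ b ∈ Finset.range nb, Nfun C i c (S + 2 * (b : ℤ) - (ξ j' - 2 * (en : ℤ)) + 1) := by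
  rw [Finset.sum_congr rfl (fun a _ => Bent_mul C _ _ _), Finset.sum_sub_distrib]
  rcases hξ with h1 | h2
  · rw [sum_ite_single n _ _ (en + 1) hen (fun a ha => by
      simp only [HasArrow]
      rw [hCji]
      omega)]
    rw [sum_ite_single n _ _ en (by omega) (fun a ha => by
      simp only [HasArrow]
      rw [hCij]
      omega)]
    rw [Lm_succ]
    rw [show Lrow C ξ c S nb i (en + 1)
        = ∑ b ∈ Finset.range nb, Nfun C i c (S + 2 * (b : ℤ) - (ξ j' - 2 * (en : ℤ)) + 1) from
      Finset.sum_congr rfl (fun b _ => congrArg _ (by push_cast; omega))]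
    ring
  · rw [sum_ite_single n _ _ en (by omega) (fun a ha => by
      simp only [HasArrow]
      rw [hCji]
      omega)]
    have hrow : Lrow C ξ c S nb i en
        = ∑ b ∈ Finset.range nb, Nfun C i c (S + 2 * (b : ℤ) - (ξ j' - 2 * (en : ℤ)) + 1) :=
      Finset.sum_congr rfl (fun b _ => congrArg _ (by omega))
    by_cases he1 : 1 ≤ en
    · rw [sum_ite_single n _ _ (en - 1) (by omega) (fun a ha => by
        simp only [HasArrow]
        rw [hCij]
        omega)]
      rw [show en = (en - 1) + 1 from by omega, Lm_succ, show en - 1 + 1 = en from by omega,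
        ← hrow]
      ring
    · have he0 : en = 0 := by omega
      subst he0
      rw [sum_ite_none n _ _ (fun a ha => by
        simp only [HasArrow]
        rw [hCij]
        omega)]
      rw [Lm_zero, ← hrow]
      ring

/-- `(L^{≤ξ}_ℓ, B^{≤ξ}_ℓ)` is a compatible pair:
`((B^{≤ξ}_ℓ)ᵀ L^{≤ξ}_ℓ)(w, v) = Σ_u B(u,w)·L(u,v)` equals `2` if `w = v` and `0`
otherwise, for every mutable vertex `w` (i.e. `w ∈ Î^{≤ξ}_{ℓ−1}`) and every vertex `v`. -/
theorem stmt14 (C : Matrix I I ℤ) (hsym : C.IsSymm) (hdiag : ∀ i, C i i = 2)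
    (hoff : ∀ i j, i ≠ j → C i j = 0 ∨ C i j = -1)
    (ξ : I → ℤ) (hheight : ∀ i j, C i j = -1 → (ξ i = ξ j + 1 ∨ ξ j = ξ i + 1))
    (ℓ : ℕ) (hℓ : 1 ≤ ℓ) :
    ∀ w v : I × Fin (ℓ + 1), (w.2 : ℕ) < ℓ →
      (∑ u : I × Fin (ℓ + 1),
          Bent C (toVertex ξ u) (toVertex ξ w) * Lmat C ξ u v) =
        if toVertex ξ w = toVertex ξ v then 2 else 0 := by
  rintro ⟨j', e⟩ ⟨c, d⟩ hw
  have hw' : (e : ℕ) < ℓ := hw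
  have h1 : (∑ u : I × Fin (ℓ + 1),
        Bent C (toVertex ξ u) (toVertex ξ (j', e)) * Lmat C ξ u (c, d))
      = ∑ i : I, ∑ a ∈ Finset.range (ℓ + 1),
          Bent C (i, ξ i - 2 * (a : ℤ)) (j', ξ j' - 2 * ((e : ℕ) : ℤ))
            * Lm C ξ c (ξ c - 2 * ((d : ℕ) : ℤ)) ((d : ℕ) + 1) i a := by
    rw [Fintype.sum_prod_type]
    apply Finset.sum_congr rfl
    intro i _
    rw [← Fin.sum_univ_eq_sum_range (fun a =>
      Bent C (i, ξ i - 2 * (a : ℤ)) (j', ξ j' - 2 * ((e : ℕ) : ℤ))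
        * Lm C ξ c (ξ c - 2 * ((d : ℕ) : ℤ)) ((d : ℕ) + 1) i a) (ℓ + 1)]
    apply Finset.sum_congr rfl
    intro a _
    rw [Lmat_eq C ξ i a (c, d)]
    rfl
  rw [h1]
  rw [← Finset.add_sum_erase Finset.univ _ (Finset.mem_univ j')]
  rw [inner_diag C hdiag ξ c (ξ c - 2 * ((d : ℕ) : ℤ)) ((d : ℕ) + 1) j' (ℓ + 1) (e : ℕ)
    (by omega)]
  have hterm : ∀ i ∈ Finset.univ.erase j',
      (∑ a ∈ Finset.range (ℓ + 1),
          Bent C (i, ξ i - 2 * (a : ℤ)) (j', ξ j' - 2 * ((e : ℕ) : ℤ))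
            * Lm C ξ c (ξ c - 2 * ((d : ℕ) : ℤ)) ((d : ℕ) + 1) i a)
        = -(C i j') * ∑ b ∈ Finset.range ((d : ℕ) + 1),
            Nfun C i c ((ξ c - 2 * ((d : ℕ) : ℤ)) + 2 * (b : ℤ) - (ξ j' - 2 * ((e : ℕ) : ℤ)) + 1) := by
    intro i hi
    have hne : i ≠ j' := Finset.ne_of_mem_erase hi
    rcases hoff i j' hne with h0 | hm1
    · rw [inner_zero C ξ c _ _ i j' (ℓ + 1) (e : ℕ) h0 (by rw [hsym.apply i j']; exact h0),
        h0]
      ring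
    · rw [inner_off C ξ c _ _ i j' (ℓ + 1) (e : ℕ) hm1
        (by rw [hsym.apply i j']; exact hm1) (hheight i j' hm1) (by omega), hm1]
      ring
  rw [Finset.sum_congr rfl hterm]
  -- rewrite the two Lrow's into canonical form
  rw [show Lrow C ξ c (ξ c - 2 * ((d : ℕ) : ℤ)) ((d : ℕ) + 1) j' (e : ℕ)
      = ∑ b ∈ Finset.range ((d : ℕ) + 1),
          Nfun C j' c ((ξ c - 2 * ((d : ℕ) : ℤ)) + 2 * (b : ℤ) - (ξ j' - 2 * ((e : ℕ) : ℤ)))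
    from Finset.sum_congr rfl (fun b _ => congrArg _ (by omega))]
  rw [show Lrow C ξ c (ξ c - 2 * ((d : ℕ) : ℤ)) ((d : ℕ) + 1) j' ((e : ℕ) + 1)
      = ∑ b ∈ Finset.range ((d : ℕ) + 1),
          Nfun C j' c (((ξ c - 2 * ((d : ℕ) : ℤ)) + 2 * (b : ℤ) - (ξ j' - 2 * ((e : ℕ) : ℤ))) + 2)
    from Finset.sum_congr rfl (fun b _ => congrArg _ (by push_cast; omega))]
  -- swap sums
  rw [show (∑ i ∈ Finset.univ.erase j', -(C i j') * ∑ b ∈ Finset.range ((d : ℕ) + 1),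
        Nfun C i c ((ξ c - 2 * ((d : ℕ) : ℤ)) + 2 * (b : ℤ) - (ξ j' - 2 * ((e : ℕ) : ℤ)) + 1))
      = -∑ b ∈ Finset.range ((d : ℕ) + 1), ∑ i ∈ Finset.univ.erase j',
          C i j' * Nfun C i c ((ξ c - 2 * ((d : ℕ) : ℤ)) + 2 * (b : ℤ) - (ξ j' - 2 * ((e : ℕ) : ℤ)) + 1)
    from by
      have hmm : (∑ i ∈ Finset.univ.erase j', C i j' * ∑ b ∈ Finset.range ((d : ℕ) + 1),
            Nfun C i c ((ξ c - 2 * ((d : ℕ) : ℤ)) + 2 * (b : ℤ) - (ξ j' - 2 * ((e : ℕ) : ℤ)) + 1))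
          = ∑ b ∈ Finset.range ((d : ℕ) + 1), ∑ i ∈ Finset.univ.erase j',
              C i j' * Nfun C i c ((ξ c - 2 * ((d : ℕ) : ℤ)) + 2 * (b : ℤ) - (ξ j' - 2 * ((e : ℕ) : ℤ)) + 1) := by
        rw [Finset.sum_congr rfl (fun i (_ : i ∈ Finset.univ.erase j') => Finset.mul_sum _ _ _)]
        exact Finset.sum_comm
      rw [← hmm, ← Finset.sum_neg_distrib]
      exact Finset.sum_congr rfl (fun i _ => by ring)]
  have hNR : ∀ b ∈ Finset.range ((d : ℕ) + 1),
      Nfun C j' c ((ξ c - 2 * ((d : ℕ) : ℤ)) + 2 * (b : ℤ) - (ξ j' - 2 * ((e : ℕ) : ℤ)))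
        + Nfun C j' c (((ξ c - 2 * ((d : ℕ) : ℤ)) + 2 * (b : ℤ) - (ξ j' - 2 * ((e : ℕ) : ℤ))) + 2)
        + ∑ i ∈ Finset.univ.erase j',
            C i j' * Nfun C i c (((ξ c - 2 * ((d : ℕ) : ℤ)) + 2 * (b : ℤ) - (ξ j' - 2 * ((e : ℕ) : ℤ))) + 1)
      = if j' = c then
          ((if ((ξ c - 2 * ((d : ℕ) : ℤ)) + 2 * (b : ℤ) - (ξ j' - 2 * ((e : ℕ) : ℤ))) = -2 then (2:ℤ) else 0)
            - (if ((ξ c - 2 * ((d : ℕ) : ℤ)) + 2 * (b : ℤ) - (ξ j' - 2 * ((e : ℕ) : ℤ))) = 0 then 2 else 0)) else 0 :=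
    fun b _ => NR C hsym j' c _
  have hstep : -(∑ b ∈ Finset.range ((d : ℕ) + 1),
        Nfun C j' c ((ξ c - 2 * ((d : ℕ) : ℤ)) + 2 * (b : ℤ) - (ξ j' - 2 * ((e : ℕ) : ℤ)))
      + ∑ b ∈ Finset.range ((d : ℕ) + 1),
        Nfun C j' c (((ξ c - 2 * ((d : ℕ) : ℤ)) + 2 * (b : ℤ) - (ξ j' - 2 * ((e : ℕ) : ℤ))) + 2))
      + -∑ b ∈ Finset.range ((d : ℕ) + 1), ∑ i ∈ Finset.univ.erase j',
          C i j' * Nfun C i c (((ξ c - 2 * ((d : ℕ) : ℤ)) + 2 * (b : ℤ) - (ξ j' - 2 * ((e : ℕ) : ℤ))) + 1)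
      = -∑ b ∈ Finset.range ((d : ℕ) + 1),
          (if j' = c then
            ((if ((ξ c - 2 * ((d : ℕ) : ℤ)) + 2 * (b : ℤ) - (ξ j' - 2 * ((e : ℕ) : ℤ))) = -2 then (2:ℤ) else 0)
              - (if ((ξ c - 2 * ((d : ℕ) : ℤ)) + 2 * (b : ℤ) - (ξ j' - 2 * ((e : ℕ) : ℤ))) = 0 then 2 else 0)) else 0) := by
    rw [← Finset.sum_congr rfl hNR, Finset.sum_add_distrib, Finset.sum_add_distrib]
    ring
  rw [hstep]
  by_cases hjc : j' = c
  · subst hjc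
    rw [Finset.sum_congr rfl (fun b _ => if_pos rfl), Finset.sum_sub_distrib]
    rcases lt_trichotomy (e : ℕ) (d : ℕ) with hlt | heq | hgt
    · rw [sum_ite_single ((d : ℕ) + 1) _ _ ((d : ℕ) - (e : ℕ) - 1) (by omega)
        (fun b hb => by omega)]
      rw [sum_ite_single ((d : ℕ) + 1) _ _ ((d : ℕ) - (e : ℕ)) (by omega)
        (fun b hb => by omega)]
      rw [if_neg (fun hcon => by
        simp only [toVertex, Prod.mk.injEq] at hcon
        omega)]
      norm_num
    · rw [sum_ite_none ((d : ℕ) + 1) _ _ (fun b hb => by omega)]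
      rw [sum_ite_single ((d : ℕ) + 1) _ _ 0 (by omega) (fun b hb => by omega)]
      rw [if_pos (by
        simp only [toVertex, Prod.mk.injEq]
        exact ⟨trivial, by omega⟩)]
      norm_num
    · rw [sum_ite_none ((d : ℕ) + 1) _ _ (fun b hb => by omega)]
      rw [sum_ite_none ((d : ℕ) + 1) _ _ (fun b hb => by omega)]
      rw [if_neg (fun hcon => by
        simp only [toVertex, Prod.mk.injEq] at hcon
        omega)]
      norm_num
  · rw [Finset.sum_congr rfl (fun b _ => if_neg hjc), Finset.sum_const_zero, neg_zero]
    rw [if_neg (fun hcon => by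
      simp only [toVertex, Prod.mk.injEq] at hcon
      exact hjc hcon.1)]
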